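/- Confluence of terminal well-founded inductions: Let P be a logic program over a finite type of atoms. Then any two terminal well-founded inductions of P have the same limit, i.e., if ν⁰,…,ν^m and μ⁰,…,μ^k are terminal well-founded inductions of P, then ν^m = μ^k. -/

import Mathlib

noncomputable section
open scoped Classical

namespace CP

/-- The three truth values. -/
inductive TV where
  | f | u | t
deriving DecidableEq

namespace TV

/-- Rank of a truth value in the truth order `f ≤_t u ≤_t t`. -/
def rank : TV → ℕ
  | f => 0
  | u => 1
  | t => 2

/-- Minimum in the truth order. -/
def tmin (a b : TV) : TV := if rank a ≤ rank b then a else b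

/-- Maximum in the truth order. -/
def tmax (a b : TV) : TV := if rank a ≤ rank b then b else a

/-- Kleene negation. -/
def tneg : TV → TV
  | f => t
  | u => u
  | t => f

/-- The precision order on truth values: `u ≤_p f` and `u ≤_p t` (and reflexivity). -/
def lep (a b : TV) : Prop := a = u ∨ a = b

end TV

/-- Pointwise precision order on three-valued interpretations. -/
def leP {A : Type} (ν ν' : A → TV) : Prop := ∀ a, TV.lep (ν a) (ν' a)

/-- Propositional formulas over a type `A` of atoms. -/
inductive Form (A : Type) where
  | atom : A → Form A
  | conj : Form A → Form A → Form A
  | disj : Form A → Form A → Form A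
  | neg  : Form A → Form A

namespace Form

variable {A : Type}

/-- Two-valued satisfaction of a formula in an interpretation (a set of atoms). -/
def sat (I : Set A) : Form A → Prop
  | .atom a => a ∈ I
  | .conj φ ψ => sat I φ ∧ sat I ψ
  | .disj φ ψ => sat I φ ∨ sat I ψ
  | .neg φ => ¬ sat I φ

/-- Kleene three-valued valuation of a formula. -/
def val (ν : A → TV) : Form A → TV
  | .atom a => ν a
  | .conj φ ψ => TV.tmin (val ν φ) (val ν ψ)
  | .disj φ ψ => TV.tmax (val ν φ) (val ν ψ)
  | .neg φ => TV.tneg (val ν φ)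

/-- A formula is positive if it contains no negation. -/
def Positive : Form A → Prop
  | .atom _ => True
  | .conj φ ψ => Positive φ ∧ Positive ψ
  | .disj φ ψ => Positive φ ∧ Positive ψ
  | .neg _ => False

/-- The set of atoms occurring in a formula. -/
def atoms : Form A → Set A
  | .atom a => {a}
  | .conj φ ψ => atoms φ ∪ atoms ψ
  | .disj φ ψ => atoms φ ∪ atoms ψ
  | .neg φ => atoms φ

/-- Atoms occurring under a number of negations of parity `b` (`true` = odd). -/
def atomsPar : Bool → Form A → Set A
  | b, .atom a => if b then ∅ else {a}
  | b, .conj φ ψ => atomsPar b φ ∪ atomsPar b ψ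
  | b, .disj φ ψ => atomsPar b φ ∪ atomsPar b ψ
  | b, .neg φ => atomsPar (!b) φ

/-- Atoms occurring within the scope of an odd number of negations. -/
def natoms (φ : Form A) : Set A := atomsPar true φ

end Form

/-- A CP-law: a nonempty head list of distinct atoms with probabilities in `(0,1]`
summing to at most `1`, together with a body formula. -/
structure CPLaw (A : Type) where
  head : List (A × ℝ)
  body : Form A
  head_ne : head ≠ []
  head_nodup : (head.map Prod.fst).Nodup
  head_pos : ∀ p ∈ head, 0 < p.2 ∧ p.2 ≤ 1
  head_sum : (head.map Prod.snd).sum ≤ 1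

namespace CPLaw

variable {A : Type}

/-- `head_At(r)`: the set of atoms occurring in the head of `r`. -/
def headAt (r : CPLaw A) : Set A := {a | a ∈ r.head.map Prod.fst}

/-- The sum `Σᵢ αᵢ` of the probabilities in the head of `r`. -/
def psum (r : CPLaw A) : ℝ := (r.head.map Prod.snd).sum

end CPLaw

/-- A probabilistic process: a finite rooted tree (given by a parent function with a
depth function ensuring well-foundedness), with an interpretation, an edge probability
and a path probability attached to each node, together with (for use in execution
models) a CP-law index `rule` attached to each node and, for each non-root node, the
`choice` in the head of the rule fired at its parent that it corresponds to
(`none` is the extra child carrying the leftover probability `1 - Σᵢ αᵢ`). -/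
structure Proc (A R : Type) where
  Node : Type
  [fintypeNode : Fintype Node]
  root : Node
  parent : Node → Node
  depth : Node → ℕ
  interp : Node → Set A
  prob : Node → ℝ
  pathProb : Node → ℝ
  rule : Node → R
  choice : Node → Option ℕ
  depth_root : depth root = 0
  depth_parent : ∀ s, s ≠ root → depth s = depth (parent s) + 1
  pathProb_root : pathProb root = 1
  pathProb_parent : ∀ s, s ≠ root → pathProb s = pathProb (parent s) * prob s

attribute [instance] Proc.fintypeNode

namespace Proc

variable {A R : Type} (W : Proc A R)

/-- `s'` is a child of `s`. -/
def isChild (s' s : W.Node) : Prop := s' ≠ W.root ∧ W.parent s' = s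

/-- `s` is a leaf. -/
def isLeaf (s : W.Node) : Prop := ∀ s', ¬ W.isChild s' s

/-- `strictAnc a b`: `a` is a strict ancestor of `b`. -/
def strictAnc (a b : W.Node) : Prop :=
  Relation.TransGen (fun y x => W.isChild y x) b a

end Proc

variable {A R : Type}

/-- `R_E(s)`: the CP-laws that have not fired at any strict ancestor of `s`. -/
def RE (W : Proc A R) (s : W.Node) : Set R :=
  {r | ∀ s', W.strictAnc s' s → W.rule s' ≠ r}

/-- The CP-law `E(s)` fires at the non-leaf node `s`: `s` has exactly one child for
each head element `(Aᵢ, αᵢ)` (with interpretation `I(s) ∪ {Aᵢ}` and edge probability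
`αᵢ`), plus exactly one extra child with unchanged interpretation and edge probability
`1 - Σᵢ αᵢ` in case `Σᵢ αᵢ < 1`. -/
def FiresAt (C : R → CPLaw A) (W : Proc A R) (s : W.Node) : Prop :=
  (∀ s', W.isChild s' s →
     (∀ i, W.choice s' = some i →
        ∃ h : i < (C (W.rule s)).head.length,
          W.interp s' = insert ((C (W.rule s)).head.get ⟨i, h⟩).1 (W.interp s) ∧
          W.prob s' = ((C (W.rule s)).head.get ⟨i, h⟩).2) ∧
     (W.choice s' = none →
        (C (W.rule s)).psum < 1 ∧ W.interp s' = W.interp s ∧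
          W.prob s' = 1 - (C (W.rule s)).psum)) ∧
  (∀ s₁ s₂, W.isChild s₁ s → W.isChild s₂ s → W.choice s₁ = W.choice s₂ → s₁ = s₂) ∧
  (∀ i, i < (C (W.rule s)).head.length → ∃ s', W.isChild s' s ∧ W.choice s' = some i) ∧
  ((C (W.rule s)).psum < 1 → ∃ s', W.isChild s' s ∧ W.choice s' = none)

/-- `⟨W, I, E⟩` is a weak execution model of the CP-theory `C`. -/
def IsWEM (C : R → CPLaw A) (W : Proc A R) : Prop :=
  W.interp W.root = (∅ : Set A) ∧
  (∀ s, s ≠ W.root → 0 ≤ W.prob s ∧ W.prob s ≤ 1) ∧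
  (∀ s, ¬ W.isLeaf s →
    (∑ s' ∈ Finset.univ.filter (fun s' => W.isChild s' s), W.prob s') = 1) ∧
  (∀ s, ¬ W.isLeaf s →
    W.rule s ∈ RE W s ∧ Form.sat (W.interp s) (C (W.rule s)).body ∧ FiresAt C W s) ∧
  (∀ l, W.isLeaf l → ∀ r ∈ RE W l, ¬ Form.sat (W.interp l) (C r).body)

/-- `ν 0, …, ν n` is a hypothetical derivation sequence at node `s`. -/
def IsHDS (C : R → CPLaw A) (W : Proc A R) (s : W.Node)
    (ν : ℕ → A → TV) (n : ℕ) : Prop :=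
  (∀ a, ν 0 a = if a ∈ W.interp s then TV.t else TV.f) ∧
  ∀ i, i < n → ∃ r ∈ RE W s,
    Form.val (ν i) (C r).body ≠ TV.f ∧
    (∀ p ∈ (C r).headAt, ν i p = TV.f → ν (i+1) p = TV.u) ∧
    (∀ p, ¬ (p ∈ (C r).headAt ∧ ν i p = TV.f) → ν (i+1) p = ν i p)

/-- The hypothetical derivation sequence `ν 0, …, ν n` at `s` is terminal. -/
def HDSTerminal (C : R → CPLaw A) (W : Proc A R) (s : W.Node)
    (ν : ℕ → A → TV) (n : ℕ) : Prop :=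
  ¬ ∃ r ∈ RE W s, Form.val (ν n) (C r).body ≠ TV.f ∧
      ∃ p ∈ (C r).headAt, ν n p = TV.f

/-- `⟨W, I, E⟩` is an execution model of `C`: a weak execution model in which, at every
non-leaf node, the body of the fired CP-law is not unknown in the potential of the
node (the common limit of all terminal hypothetical derivation sequences). -/
def IsExec (C : R → CPLaw A) (W : Proc A R) : Prop :=
  IsWEM C W ∧
  ∀ s, ¬ W.isLeaf s → ∀ ν n, IsHDS C W s ν n → HDSTerminal C W s ν n →
    Form.val (ν n) (C (W.rule s)).body ≠ TV.u

/-- `π_T`: the probability distribution on interpretations induced by a process. -/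
def piT (W : Proc A R) (J : Set A) : ℝ :=
  ∑ l ∈ Finset.univ.filter (fun l => W.isLeaf l ∧ W.interp l = J), W.pathProb l

/-- A `C`-selection: for each CP-law occurrence, either a head element (`some i`)
or the distinguished `∅` outcome (`none`), which carries probability `1 - Σᵢ αᵢ`. -/
abbrev Sel (C : R → CPLaw A) : Type := (r : R) → Option (Fin (C r).head.length)

/-- The probability `σ^α(r)` of the outcome selected for `r` by `σ`. -/
def selWeight (C : R → CPLaw A) (σ : Sel C) (r : R) : ℝ :=
  match σ r with
  | some i => ((C r).head.get i).2
  | none => 1 - (C r).psum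

/-- The probability `P(σ) = Π_{r ∈ C} σ^α(r)` of a `C`-selection. -/
def selProb [Fintype R] (C : R → CPLaw A) (σ : Sel C) : ℝ :=
  ∏ r, selWeight C σ r

/-- `σ` extends the partial selection `σ(s)` determined by the path from the root
to `s`: for every strict ancestor `s'` of `s`, `σ` assigns to the rule fired at `s'`
the head element corresponding to the child of `s'` lying on the path to `s`. -/
def ExtendsPathSel (C : R → CPLaw A) (W : Proc A R) (σ : Sel C) (s : W.Node) : Prop :=
  ∀ s' s'', W.strictAnc s' s → W.isChild s'' s' → (s'' = s ∨ W.strictAnc s'' s) →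
    (σ (W.rule s')).map Fin.val = W.choice s''

/-- `ν` updated to map `p` to true. -/
def updT {A : Type} (ν : A → TV) (p : A) : A → TV :=
  fun a => if a = p then TV.t else ν a

/-- One step of a well-founded induction for the logic program `P` (a family of
rules, each a pair of a head atom and a body formula): either make the head of a
rule with true body true, or make an unfounded set false. -/
def WFStep {A Q : Type} (P : Q → A × Form A) (ν ν' : A → TV) : Prop :=
  (∃ q, Form.val ν (P q).2 = TV.t ∧ ν' = updT ν (P q).1) ∨
  (∃ U : Set A, (∀ p ∈ U, ν p = TV.u) ∧
    (∀ p, ν' p = if p ∈ U then TV.f else ν p) ∧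
    (∀ q, (P q).1 ∈ U → Form.val ν' (P q).2 = TV.f))

/-- `ν 0, …, ν m` is a well-founded induction of the logic program `P`. -/
def IsWFI {A Q : Type} (P : Q → A × Form A) (ν : ℕ → A → TV) (m : ℕ) : Prop :=
  (∀ a, ν 0 a = TV.u) ∧ ∀ j, j < m → WFStep P (ν j) (ν (j+1))

/-- The well-founded induction with limit `ν m` is terminal: no further step yields a
strictly more precise interpretation. -/
def WFITerminal {A Q : Type} (P : Q → A × Form A) (ν : ℕ → A → TV) (m : ℕ) : Prop :=
  ∀ ν', WFStep P (ν m) ν' → leP (ν m) ν' → ν' = ν m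

/-- The instance `C^σ`: the logic program consisting of the rules
`σ^h(r) ← body(r)` for all `r` with `σ^h(r) ≠ ∅`. -/
def instProg (C : R → CPLaw A) (σ : Sel C) :
    {r : R // (σ r).isSome} → A × Form A :=
  fun q => (((C q.1).head.get ((σ q.1).get q.2)).1, (C q.1).body)

/-- The logic program `P` has an exact well-founded model equal to `J`: some terminal
well-founded induction of `P` has as its limit the total interpretation corresponding
to `J`. -/
def LimitIs {A Q : Type} (P : Q → A × Form A) (J : Set A) : Prop :=
  ∃ ν m, IsWFI P ν m ∧ WFITerminal P ν m ∧
    ∀ a, ν m a = if a ∈ J then TV.t else TV.f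

/-- The instance based semantics `μ_C`. -/
def muC [Fintype R] (C : R → CPLaw A) (J : Set A) : ℝ :=
  ∑ σ ∈ Finset.univ.filter (fun σ : Sel C => LimitIs (instProg C σ) J),
    selProb C σ


section Confluence

instance : Fintype TV := ⟨{TV.f, TV.u, TV.t}, by intro a; cases a <;> simp⟩
instance : ∀ a b : TV, Decidable (TV.lep a b) := fun a b => by
  unfold TV.lep; infer_instance

lemma lep_refl (a : TV) : TV.lep a a := Or.inr rfl
lemma lep_antisymm : ∀ {a b : TV}, TV.lep a b → TV.lep b a → a = b := by decide
lemma lep_trans : ∀ {a b c : TV}, TV.lep a b → TV.lep b c → TV.lep a c := by decide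
lemma lep_t_left : ∀ {a : TV}, TV.lep TV.t a → a = TV.t := by decide
lemma lep_f_left : ∀ {a : TV}, TV.lep TV.f a → a = TV.f := by decide
lemma lep_u (a : TV) : TV.lep TV.u a := Or.inl rfl
lemma lep_ne_t : ∀ {a b : TV}, TV.lep a b → b ≠ TV.t → a ≠ TV.t := by decide
lemma lep_f_of_ne_t : ∀ {a : TV}, a ≠ TV.t → TV.lep a TV.f := by decide
lemma lep_t_of_ne_f : ∀ {a : TV}, a ≠ TV.f → TV.lep a TV.t := by decide
lemma tmin_mono : ∀ {a b c d : TV}, TV.lep a b → TV.lep c d →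
    TV.lep (TV.tmin a c) (TV.tmin b d) := by decide
lemma tmax_mono : ∀ {a b c d : TV}, TV.lep a b → TV.lep c d →
    TV.lep (TV.tmax a c) (TV.tmax b d) := by decide
lemma tneg_mono : ∀ {a b : TV}, TV.lep a b → TV.lep (TV.tneg a) (TV.tneg b) := by decide

variable {A Q : Type}

lemma val_mono {ν ν' : A → TV} (h : leP ν ν') :
    ∀ φ : Form A, TV.lep (Form.val ν φ) (Form.val ν' φ)
  | .atom a => h a
  | .conj φ ψ => tmin_mono (val_mono h φ) (val_mono h ψ)
  | .disj φ ψ => tmax_mono (val_mono h φ) (val_mono h ψ)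
  | .neg φ => tneg_mono (val_mono h φ)

/-- The invariant: every rule whose head is false has a false body. -/
def Inv (P : Q → A × Form A) (ξ : A → TV) : Prop :=
  ∀ q, ξ (P q).1 = TV.f → Form.val ξ (P q).2 = TV.f

lemma step_mono {P : Q → A × Form A} {ξ ξ' : A → TV} (hI : Inv P ξ)
    (h : WFStep P ξ ξ') : leP ξ ξ' ∧ Inv P ξ' := by
  rcases h with ⟨q, hv, rfl⟩ | ⟨U, hU, hval, hq⟩
  · have hne : ξ (P q).1 ≠ TV.f := by
      intro hf
      have := hI q hf
      rw [hv] at this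
      exact absurd this (by decide)
    have hle : leP ξ (updT ξ (P q).1) := by
      intro a
      by_cases ha : a = (P q).1
      · simp only [updT, if_pos ha]
        rw [ha]
        exact lep_t_of_ne_f hne
      · simp only [updT, if_neg ha]
        exact lep_refl _
    refine ⟨hle, ?_⟩
    intro q' hf
    have hne' : (P q').1 ≠ (P q).1 := by
      intro e
      simp only [updT, if_pos e] at hf
      exact absurd hf (by decide)
    simp only [updT, if_neg hne'] at hf
    have h1 := hI q' hf
    have h2 := val_mono hle (P q').2
    rw [h1] at h2
    exact lep_f_left h2
  · have hle : leP ξ ξ' := by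
      intro a
      rw [hval a]
      by_cases ha : a ∈ U
      · rw [if_pos ha, hU a ha]
        exact Or.inl rfl
      · rw [if_neg ha]
        exact lep_refl _
    refine ⟨hle, ?_⟩
    intro q' hf
    by_cases hm : (P q').1 ∈ U
    · exact hq q' hm
    · rw [hval, if_neg hm] at hf
      have h1 := hI q' hf
      have h2 := val_mono hle (P q').2
      rw [h1] at h2
      exact lep_f_left h2

lemma wfi_inv {P : Q → A × Form A} {ν : ℕ → A → TV} {m : ℕ}
    (h : IsWFI P ν m) : ∀ j, j ≤ m → Inv P (ν j) := by
  intro j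
  induction j with
  | zero =>
    intro _ q hf
    rw [h.1] at hf
    exact absurd hf (by decide)
  | succ j ih =>
    intro hj
    exact (step_mono (ih (by omega)) (h.2 j (by omega))).2

lemma wfi_mono {P : Q → A × Form A} {ν : ℕ → A → TV} {m : ℕ}
    (h : IsWFI P ν m) : ∀ i j, i ≤ j → j ≤ m → leP (ν i) (ν j) := by
  intro i j hij hjm
  induction j with
  | zero =>
    have : i = 0 := by omega
    subst this
    intro a; exact lep_refl _
  | succ j ih =>
    by_cases h' : i = j + 1
    · subst h'; intro a; exact lep_refl _
    · have hij' : i ≤ j := by omega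
      intro a
      exact lep_trans (ih hij' (by omega) a)
        ((step_mono (wfi_inv h j (by omega)) (h.2 j (by omega))).1 a)

lemma limit_ge {P : Q → A × Form A} {ν : ℕ → A → TV} {m : ℕ}
    (h₁ : IsWFI P ν m) (h₂ : WFITerminal P ν m)
    {μ : ℕ → A → TV} {k : ℕ} (h₃ : IsWFI P μ k) :
    ∀ j, j ≤ k → leP (μ j) (ν m) := by
  intro j
  induction j with
  | zero =>
    intro _ a
    rw [h₃.1 a]
    exact lep_u _
  | succ j ih =>
    intro hjk
    have IH : leP (μ j) (ν m) := ih (by omega)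
    rcases h₃.2 j (by omega) with ⟨q, hv, hupd⟩ | ⟨U, hU, hval, hq⟩
    · -- true step: μ (j+1) = updT (μ j) (P q).1 with body true
      have hvt : Form.val (ν m) (P q).2 = TV.t := by
        have := val_mono IH (P q).2
        rw [hv] at this
        exact lep_t_left this
      have hInv := wfi_inv h₁ m le_rfl
      have hnf : ν m (P q).1 ≠ TV.f := by
        intro hf
        have := hInv q hf
        rw [hvt] at this
        exact absurd this (by decide)
      have hnt : ν m (P q).1 = TV.t := by
        by_contra hnu'
        have hu : ν m (P q).1 = TV.u := by
          cases h : ν m (P q).1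
          · exact absurd h hnf
          · rfl
          · exact absurd h hnu'
        have hstep : WFStep P (ν m) (updT (ν m) (P q).1) := Or.inl ⟨q, hvt, rfl⟩
        have hle : leP (ν m) (updT (ν m) (P q).1) := by
          intro a
          by_cases ha : a = (P q).1
          · simp only [updT, if_pos ha]
            rw [ha, hu]
            exact Or.inl rfl
          · simp only [updT, if_neg ha]
            exact lep_refl _
        have heq := h₂ _ hstep hle
        have := congrFun heq (P q).1
        simp only [updT, if_pos rfl] at this
        rw [hu] at this
        exact absurd this (by decide)
      rw [hupd]
      intro a
      by_cases ha : a = (P q).1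
      · simp only [updT, if_pos ha]
        rw [ha, hnt]
        exact lep_refl _
      · simp only [updT, if_neg ha]
        exact IH a
    · -- false step on unfounded set U
      have stepA : ∀ a ∈ U, ν m a ≠ TV.t := by
        intro a₀ ha₀ hV
        have hex : ∃ i, ∃ a, a ∈ U ∧ ν m a = TV.t ∧ ν i a = TV.t :=
          ⟨m, a₀, ha₀, hV, hV⟩
        obtain ⟨a, haU, haV, hat⟩ := Nat.find_spec hex
        set i := Nat.find hex with hidef
        have him : i ≤ m := Nat.find_min' hex ⟨a₀, ha₀, hV, hV⟩
        have hi0 : i ≠ 0 := by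
          intro h0
          rw [h0, h₁.1 a] at hat
          exact absurd hat (by decide)
        have hprev : ∀ b ∈ U, ν m b = TV.t → ν (i-1) b ≠ TV.t := by
          intro b hb hbV hbt
          exact Nat.find_min hex (by omega) ⟨b, hb, hbV, hbt⟩
        have hstep := h₁.2 (i-1) (by omega)
        have hieq : i - 1 + 1 = i := by omega
        rw [hieq] at hstep
        rcases hstep with ⟨q, hv', hupd'⟩ | ⟨U', hU', hval', hq'⟩
        · have haeq : a = (P q).1 := by
            by_contra hne
            rw [hupd'] at hat
            simp only [updT, if_neg hne] at hat
            exact hprev a haU haV hat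
          have hle1 : leP (ν (i-1)) (fun b => if b ∈ U then TV.f else ν m b) := by
            intro b
            by_cases hbU : b ∈ U
            · simp only [if_pos hbU]
              apply lep_f_of_ne_t
              by_cases hbV : ν m b = TV.t
              · exact hprev b hbU hbV
              · exact lep_ne_t (wfi_mono h₁ (i-1) m (by omega) le_rfl b) hbV
            · simp only [if_neg hbU]
              exact wfi_mono h₁ (i-1) m (by omega) le_rfl b
          have hle2 : leP (μ (j+1)) (fun b => if b ∈ U then TV.f else ν m b) := by
            intro b
            rw [hval b]
            by_cases hbU : b ∈ U
            · simp only [if_pos hbU]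
              exact lep_refl _
            · simp only [if_neg hbU]
              exact IH b
          have ht : Form.val (fun b => if b ∈ U then TV.f else ν m b) (P q).2 = TV.t := by
            have := val_mono hle1 (P q).2
            rw [hv'] at this
            exact lep_t_left this
          have hf : Form.val (fun b => if b ∈ U then TV.f else ν m b) (P q).2 = TV.f := by
            have hb : (P q).1 ∈ U := haeq ▸ haU
            have := val_mono hle2 (P q).2
            rw [hq q hb] at this
            exact lep_f_left this
          rw [ht] at hf
          exact absurd hf (by decide)
        · rw [hval' a] at hat
          by_cases haU' : a ∈ U'
          · rw [if_pos haU'] at hat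
            exact absurd hat (by decide)
          · rw [if_neg haU'] at hat
            exact hprev a haU haV hat
      have stepB : ∀ a ∈ U, ν m a = TV.f := by
        by_contra hc
        push_neg at hc
        set V' : A → TV := fun a => if a ∈ U ∧ ν m a = TV.u then TV.f else ν m a
          with hV'
        have hle2 : leP (μ (j+1)) V' := by
          intro b
          rw [hval b]
          by_cases hbU : b ∈ U
          · rw [if_pos hbU]
            by_cases hbu : ν m b = TV.u
            · have hpos : b ∈ U ∧ ν m b = TV.u := ⟨hbU, hbu⟩
              simp only [hV', if_pos hpos]
              exact lep_refl _
            · have hbf : ν m b = TV.f := by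
                cases h : ν m b
                · rfl
                · exact absurd h hbu
                · exact absurd h (stepA b hbU)
              have : ¬ (b ∈ U ∧ ν m b = TV.u) := fun h' => hbu h'.2
              simp only [hV', if_neg this, hbf]
              exact lep_refl _
          · rw [if_neg hbU]
            have : ¬ (b ∈ U ∧ ν m b = TV.u) := fun h' => hbU h'.1
            simp only [hV', if_neg this]
            exact IH b
        have hstep : WFStep P (ν m) V' := by
          refine Or.inr ⟨{a | a ∈ U ∧ ν m a = TV.u}, fun p hp => hp.2, ?_, ?_⟩
          · intro p
            simp only [hV', Set.mem_setOf_eq]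
          · intro q' hq'
            have hb : (P q').1 ∈ U := hq'.1
            have := val_mono hle2 (P q').2
            rw [hq q' hb] at this
            exact lep_f_left this
        have hleP : leP (ν m) V' := by
          intro b
          by_cases hb : b ∈ U ∧ ν m b = TV.u
          · simp only [hV', if_pos hb]
            rw [hb.2]
            exact Or.inl rfl
          · simp only [hV', if_neg hb]
            exact lep_refl _
        have heq := h₂ V' hstep hleP
        obtain ⟨b, hbU, hbne⟩ := hc
        have hbu : ν m b = TV.u := by
          cases h : ν m b
          · exact absurd h hbne
          · rfl
          · exact absurd h (stepA b hbU)
        have hb : V' b = TV.f := by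
          have hpos : b ∈ U ∧ ν m b = TV.u := ⟨hbU, hbu⟩
          simp only [hV', if_pos hpos]
        rw [heq, hbu] at hb
        exact absurd hb (by decide)
      intro a
      rw [hval a]
      by_cases ha : a ∈ U
      · rw [if_pos ha, stepB a ha]
        exact lep_refl _
      · rw [if_neg ha]
        exact IH a

end Confluence

/-- Confluence of terminal well-founded inductions: any two terminal well-founded
inductions of a logic program have the same limit. -/
theorem wfi_confluence {A Q : Type} [Fintype A] [Fintype Q]
    (P : Q → A × Form A)
    (ν : ℕ → A → TV) (m : ℕ) (μ : ℕ → A → TV) (k : ℕ)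
    (h₁ : IsWFI P ν m) (h₂ : WFITerminal P ν m)
    (h₃ : IsWFI P μ k) (h₄ : WFITerminal P μ k) :
    ν m = μ k := by
  funext a
  exact lep_antisymm (limit_ge h₃ h₄ h₁ m le_rfl a) (limit_ge h₁ h₂ h₃ k le_rfl a)

end CP
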